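/- For any knot K in S^3, theta(K) + theta(-K) <= u(K), where u(K) is the unknotting number of K. -/
import Mathlib


/-- An abstract model of the setting of Baraglia–Hekmati: the collection of
(isotopy classes of) knots in `S³` together with the invariants entering the
definition of the concordance invariant `θ`.  Here `delta K j` models the
equivariant d-invariants `δ_j(K) = 2 d_{ℤ/2,Q^j}(Σ₂(K), s₀)` of the double
cover `Σ₂(K)` of `S³` branched over `K`, equipped with its distinguished
spin^c structure `s₀` and covering involution. -/
structure KnotTheory where
  /-- knots in `S³` -/
  Knot : Type
  /-- the mirror image with reversed orientation, `-K` -/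
  mirror : Knot → Knot
  /-- the knot signature `σ(K)` -/
  sigma : Knot → ℤ
  /-- the smooth slice genus `g₄(K)` -/
  g4 : Knot → ℕ
  /-- the equivariant d-invariants `δ_j(K) = 2 d_{ℤ/2,Q^j}(Σ₂(K), s₀)` -/
  delta : Knot → ℕ → ℤ
  sigma_mirror : ∀ K, sigma (mirror K) = - sigma K
  g4_mirror : ∀ K, g4 (mirror K) = g4 K

namespace KnotTheory

variable (T : KnotTheory)

/-- `ξ_j(K) = δ_j(K)/4 + σ(K)/8`. -/
noncomputable def xi (K : T.Knot) (j : ℕ) : ℚ :=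
  (T.delta K j : ℚ) / 4 + (T.sigma K : ℚ) / 8

/-- `j(K)`: the least `j` with `ξ_j(K) = 0`. -/
noncomputable def jmin (K : T.Knot) : ℕ := sInf {j : ℕ | T.xi K j = 0}

/-- `θ(K) = max {0, j(-K) - σ(K)/2}`. -/
noncomputable def theta (K : T.Knot) : ℚ :=
  max 0 ((T.jmin (T.mirror K) : ℚ) - (T.sigma K : ℚ) / 2)

/-- The properties of `ξ` established by Baraglia–Hekmati: it is a
non-increasing sequence of non-negative integers, vanishing for
`j ≥ g₄(K) - σ(K)/2`. -/
def XiProperties : Prop :=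
  (∀ K j, 0 ≤ T.xi K j) ∧
  (∀ K j, T.xi K (j + 1) ≤ T.xi K j) ∧
  (∀ K j, ∃ n : ℤ, T.xi K j = (n : ℚ)) ∧
  (∀ (K : T.Knot) (j : ℕ), (T.g4 K : ℚ) - (T.sigma K : ℚ) / 2 ≤ (j : ℚ) → T.xi K j = 0)

end KnotTheory

/-- For any knot `K`, `θ(K) + θ(-K) ≤ u(K)`, where `u(K)`
is the unknotting number of `K`.  Here `CrossingChange K₊ K₋` models the
relation "`K₋` is obtained from `K₊` by changing a positive crossing into a
negative crossing" (reversed by taking mirrors), and the unknotting number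
`u K` is the least `n` such that `K` can be reached from the unknot by a
sequence of `n` crossing changes.  The hypotheses record the context facts:
`θ` vanishes on the unknot, and a single crossing change satisfies
`0 ≤ θ(K₊) - θ(K₋) ≤ 1`. -/
theorem theta_le_unknotting_number (T : KnotTheory) (hXi : T.XiProperties)
    (CrossingChange : T.Knot → T.Knot → Prop)
    (crossingChange_mirror : ∀ Kp Km, CrossingChange Kp Km →
      CrossingChange (T.mirror Km) (T.mirror Kp))
    (unknot : T.Knot)
    (mirror_unknot : T.mirror unknot = unknot)
    (theta_unknot : T.theta unknot = 0)
    (theta_crossingChange : ∀ Kp Km, CrossingChange Kp Km →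
      0 ≤ T.theta Kp - T.theta Km ∧ T.theta Kp - T.theta Km ≤ 1)
    (u : T.Knot → ℕ)
    (hu : ∀ K : T.Knot, IsLeast {n : ℕ | ∃ f : ℕ → T.Knot, f 0 = unknot ∧ f n = K ∧
      ∀ i < n, CrossingChange (f i) (f (i + 1)) ∨ CrossingChange (f (i + 1)) (f i)} (u K))
    (K : T.Knot) :
    T.theta K + T.theta (T.mirror K) ≤ (u K : ℚ) := by
  have key : ∀ Kp Km, CrossingChange Kp Km →
      |(T.theta Kp + T.theta (T.mirror Kp)) - (T.theta Km + T.theta (T.mirror Km))| ≤ 1 := by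
    intro Kp Km h
    obtain ⟨a1, a2⟩ := theta_crossingChange Kp Km h
    obtain ⟨b1, b2⟩ := theta_crossingChange _ _ (crossingChange_mirror _ _ h)
    rw [abs_le]
    constructor <;> linarith
  obtain ⟨⟨f, hf0, hfn, hstep⟩, -⟩ := hu K
  have main : ∀ i, i ≤ u K → T.theta (f i) + T.theta (T.mirror (f i)) ≤ (i : ℚ) := by
    intro i
    induction i with
    | zero =>
      intro _
      rw [hf0, mirror_unknot, theta_unknot]
      norm_num
    | succ n ih =>
      intro hn
      have hn' : n < u K := Nat.lt_of_succ_le hn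
      have step : |(T.theta (f (n+1)) + T.theta (T.mirror (f (n+1)))) -
          (T.theta (f n) + T.theta (T.mirror (f n)))| ≤ 1 := by
        rcases hstep n hn' with h | h
        · have := key _ _ h
          rw [abs_sub_comm]
          exact this
        · exact key _ _ h
      have := ih (le_of_lt hn')
      have := abs_le.mp step
      push_cast
      linarith [this.2]
  have := main (u K) le_rfl
  rwa [hfn] at this
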